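/- Let τ > 0, let E : ℕ → ℝ be a monotone nondecreasing sequence with E i ≥ 0 for all i and E i → ∞ as i → ∞, and let Ebd > 0. Then for every ε > 0 there exists an integer n > 0 such that for every α : ℕ → ℂ with ∑'_i ‖α i‖² = 1 and with (fun i => E i · ‖α i‖²) summable and ∑'_i E i · ‖α i‖² ≤ Ebd, one has ∑'_i ‖α i‖² · ‖exp(−i·(E i)·τ·n) − 1‖² < ε², where i in the exponent denotes the imaginary unit. -/

import Mathlib

lemma norm_exp_neg_I_mul (r : ℝ) : ‖Complex.exp (-Complex.I * r)‖ = 1 := by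
  rw [Complex.norm_exp]
  simp

lemma exists_recur (N : ℕ) (c : ℕ → ℝ) (δ : ℝ) (hδ : 0 < δ) :
    ∃ n : ℕ, 0 < n ∧ ∀ i < N, ‖Complex.exp (-Complex.I * c i * n) - 1‖ < δ := by
  set f : ℕ → (Fin N → ℂ) := fun m j => Complex.exp (-Complex.I * c j * m) with hf
  have hK : ∀ m, f m ∈ Metric.closedBall (0 : Fin N → ℂ) 1 := by
    intro m
    rw [Metric.mem_closedBall, dist_zero_right, pi_norm_le_iff_of_nonneg zero_le_one]
    intro j
    have : -Complex.I * c j * m = -Complex.I * ((c j : ℝ) * (m : ℝ) : ℝ) := by push_cast; ring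
    rw [hf]; simp only []
    rw [this, norm_exp_neg_I_mul]
  have htb : TotallyBounded (Metric.closedBall (0 : Fin N → ℂ) 1) :=
    (isCompact_closedBall _ _).totallyBounded
  rw [Metric.totallyBounded_iff] at htb
  obtain ⟨t, htfin, hcov⟩ := htb (δ / 2) (by positivity)
  have hmem : ∀ m : ℕ, ∃ y ∈ t, f m ∈ Metric.ball y (δ / 2) := by
    intro m
    have := hcov (hK m)
    simpa using this
  choose y hy hby using hmem
  have : ∃ a b : ℕ, a ≠ b ∧ y a = y b := by
    have := htfin.to_subtype
    obtain ⟨a, b, hab, heq⟩ := Finite.exists_ne_map_eq_of_infinite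
      (fun m : ℕ => (⟨y m, hy m⟩ : t))
    exact ⟨a, b, hab, congrArg Subtype.val heq⟩
  obtain ⟨a, b, hab, hyab⟩ := this
  wlog hlt : a < b generalizing a b
  · exact this b a hab.symm hyab.symm (by omega)
  refine ⟨b - a, by omega, ?_⟩
  intro i hi
  have hdist : dist (f a) (f b) < δ := by
    calc dist (f a) (f b) ≤ dist (f a) (y a) + dist (y a) (f b) := dist_triangle _ _ _
    _ < δ / 2 + δ / 2 := by
        apply add_lt_add
        · exact Metric.mem_ball.mp (hby a)
        · rw [hyab, dist_comm]; exact Metric.mem_ball.mp (hby b)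
    _ = δ := by ring
  have hcoord : ‖f b ⟨i, hi⟩ - f a ⟨i, hi⟩‖ < δ := by
    have := dist_le_pi_dist (f a) (f b) ⟨i, hi⟩
    rw [dist_comm] at hdist
    calc ‖f b ⟨i, hi⟩ - f a ⟨i, hi⟩‖ = dist (f b ⟨i, hi⟩) (f a ⟨i, hi⟩) := (dist_eq_norm _ _).symm
    _ ≤ dist (f b) (f a) := dist_le_pi_dist _ _ _
    _ < δ := hdist
  have key : f b ⟨i, hi⟩ - f a ⟨i, hi⟩
      = Complex.exp (-Complex.I * c i * a) * (Complex.exp (-Complex.I * c i * (b - a : ℕ)) - 1) := by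
    rw [hf]; simp only []
    rw [mul_sub, mul_one, ← Complex.exp_add]
    congr 2
    have : ((b - a : ℕ) : ℂ) = (b : ℂ) - a := by
      push_cast [Nat.cast_sub hlt.le]; ring
    rw [this]; ring
  rw [key] at hcoord
  rw [norm_mul] at hcoord
  have h1 : ‖Complex.exp (-Complex.I * (c i : ℂ) * (a : ℂ))‖ = 1 := by
    have : -Complex.I * (c i : ℂ) * (a : ℂ) = -Complex.I * ((c i * a : ℝ) : ℂ) := by
      push_cast; ring
    rw [this, norm_exp_neg_I_mul]
  rw [h1, one_mul] at hcoord
  exact hcoord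

/-- **Quantum recurrence theorem, part (ii): uniform recurrence at bounded energy.**
With nondecreasing nonnegative eigenvalues `E i → ∞`, for every `ε > 0` there is a
single `n > 0` such that every unit state whose expected energy is at most `Ebd`
returns within `ε` of itself after time `n·τ`. -/
theorem quantum_uniform_recurrence (τ : ℝ) (hτ : 0 < τ) (E : ℕ → ℝ) (hE : Monotone E)
    (hE0 : ∀ i, 0 ≤ E i) (hEtop : Filter.Tendsto E Filter.atTop Filter.atTop)
    (Ebd : ℝ) (hEbd : 0 < Ebd) (ε : ℝ) (hε : 0 < ε) :
    ∃ n : ℕ, 0 < n ∧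
      ∀ α : ℕ → ℂ, (∑' i, ‖α i‖ ^ 2 = 1) →
        Summable (fun i => E i * ‖α i‖ ^ 2) →
        (∑' i, E i * ‖α i‖ ^ 2) ≤ Ebd →
        ∑' i, ‖α i‖ ^ 2 * ‖Complex.exp (-Complex.I * (E i) * τ * n) - 1‖ ^ 2 < ε ^ 2 := by

  set M : ℝ := 8 * Ebd / ε ^ 2 with hM
  have hMpos : 0 < M := by positivity
  obtain ⟨N, hN⟩ := (Filter.tendsto_atTop.mp hEtop M).exists_forall_of_atTop
  set δ : ℝ := ε / 2 with hδdef
  obtain ⟨n, hn, hrec⟩ := exists_recur N (fun i => E i * τ) δ (by positivity)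
  refine ⟨n, hn, ?_⟩
  intro α hα1 hEsum hEle
  have hsummα : Summable (fun i => ‖α i‖ ^ 2) := by
    by_contra h
    rw [tsum_eq_zero_of_not_summable h] at hα1
    norm_num at hα1
  have hnorm1 : ∀ i : ℕ, ‖Complex.exp (-Complex.I * (E i) * τ * (n : ℂ))‖ = 1 := by
    intro i
    have : -Complex.I * (E i : ℂ) * (τ : ℂ) * (n : ℂ)
        = -Complex.I * ((E i * τ * n : ℝ) : ℂ) := by push_cast; ring
    rw [this, norm_exp_neg_I_mul]
  have hle2 : ∀ i : ℕ, ‖Complex.exp (-Complex.I * (E i) * τ * (n : ℂ)) - 1‖ ≤ 2 := by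
    intro i
    calc ‖Complex.exp (-Complex.I * (E i) * τ * (n : ℂ)) - 1‖
        ≤ ‖Complex.exp (-Complex.I * (E i) * τ * (n : ℂ))‖ + ‖(1 : ℂ)‖ := norm_sub_le _ _
    _ = 2 := by rw [hnorm1 i]; norm_num
  have hbound : ∀ i : ℕ, ‖α i‖ ^ 2 * ‖Complex.exp (-Complex.I * (E i) * τ * n) - 1‖ ^ 2
      ≤ δ ^ 2 * ‖α i‖ ^ 2 + (4 / M) * (E i * ‖α i‖ ^ 2) := by
    intro i
    by_cases hi : i < N
    · have h1 : ‖Complex.exp (-Complex.I * (E i) * τ * (n : ℂ)) - 1‖ < δ := by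
        have := hrec i hi
        have heq : -Complex.I * ((E i * τ : ℝ) : ℂ) * (n : ℂ)
            = -Complex.I * (E i : ℂ) * (τ : ℂ) * (n : ℂ) := by push_cast; ring
        rwa [heq] at this
      have h2 : ‖Complex.exp (-Complex.I * (E i) * τ * (n : ℂ)) - 1‖ ^ 2 ≤ δ ^ 2 := by
        apply sq_le_sq' <;> nlinarith [norm_nonneg (Complex.exp (-Complex.I * (E i) * τ * (n : ℂ)) - 1)]
      have h3 : 0 ≤ (4 / M) * (E i * ‖α i‖ ^ 2) :=
        mul_nonneg (by positivity) (mul_nonneg (hE0 i) (by positivity))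
      nlinarith [sq_nonneg (‖α i‖)]
    · have hMi : M ≤ E i := hN i (by omega)
      have h2 : ‖Complex.exp (-Complex.I * (E i) * τ * (n : ℂ)) - 1‖ ^ 2 ≤ 4 := by
        nlinarith [hle2 i, norm_nonneg (Complex.exp (-Complex.I * (E i) * τ * (n : ℂ)) - 1)]
      have h4 : 4 * ‖α i‖ ^ 2 ≤ (4 / M) * (E i * ‖α i‖ ^ 2) := by
        rw [div_mul_eq_mul_div, le_div_iff₀ hMpos]
        nlinarith [sq_nonneg (‖α i‖)]
      have h5 : 0 ≤ δ ^ 2 * ‖α i‖ ^ 2 := by positivity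
      nlinarith [sq_nonneg (‖α i‖)]
  have hsummRHS : Summable (fun i => δ ^ 2 * ‖α i‖ ^ 2 + (4 / M) * (E i * ‖α i‖ ^ 2)) :=
    (hsummα.mul_left _).add (hEsum.mul_left _)
  have hsummg : Summable (fun i => ‖α i‖ ^ 2 * ‖Complex.exp (-Complex.I * (E i) * τ * n) - 1‖ ^ 2) := by
    apply Summable.of_nonneg_of_le (fun i => by positivity) hbound hsummRHS
  calc ∑' i, ‖α i‖ ^ 2 * ‖Complex.exp (-Complex.I * (E i) * τ * n) - 1‖ ^ 2
      ≤ ∑' i, (δ ^ 2 * ‖α i‖ ^ 2 + (4 / M) * (E i * ‖α i‖ ^ 2)) :=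
        Summable.tsum_le_tsum hbound hsummg hsummRHS
    _ = δ ^ 2 * (∑' i, ‖α i‖ ^ 2) + (4 / M) * (∑' i, E i * ‖α i‖ ^ 2) := by
        rw [Summable.tsum_add (hsummα.mul_left _) (hEsum.mul_left _), tsum_mul_left, tsum_mul_left]
    _ ≤ δ ^ 2 * 1 + (4 / M) * Ebd := by
        have h1 : (0:ℝ) ≤ 4 / M := by positivity
        rw [hα1]
        nlinarith
    _ = 3 / 4 * ε ^ 2 := by
        rw [hδdef, hM]
        field_simp
        ring
    _ < ε ^ 2 := by nlinarith
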